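/- Let 0 ≤ d ≤ n be natural numbers with n ≥ 2, and let V be a linear subspace of F_2^n chosen uniformly at random among all d-dimensional linear subspaces of F_2^n. Then for all distinct nonzero v, w ∈ F_2^n, Pr[v ∈ V and w ∈ V] = ((2^d − 1)(2^d − 2)/2) / ((2^n − 1)(2^n − 2)/2), and moreover Pr[v ∈ V and w ∈ V] ≤ Pr[v ∈ V]·Pr[w ∈ V]. -/

import Mathlib

open Module



section Helpers

lemma nat_card_sigma_const {β : Type*} [Finite β] (g : β → Type*) [∀ b, Finite (g b)]
    {c : ℕ} (h : ∀ b, Nat.card (g b) = c) : Nat.card (Σ b, g b) = Nat.card β * c := by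
  classical
  haveI : Fintype β := Fintype.ofFinite β
  haveI : ∀ b, Fintype (g b) := fun b => Fintype.ofFinite (g b)
  simp only [Nat.card_eq_fintype_card, Fintype.card_sigma]
  have : ∀ b : β, Fintype.card (g b) = c := fun b => by
    rw [← Nat.card_eq_fintype_card]; exact h b
  simp [this, Finset.sum_const, Finset.card_univ, mul_comm]

lemma nat_card_ne {α : Type*} [Finite α] (z : α) :
    Nat.card {x : α // x ≠ z} = Nat.card α - 1 := by
  classical
  haveI : Fintype α := Fintype.ofFinite α
  simp only [Nat.card_eq_fintype_card]
  rw [Fintype.card_subtype]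
  have : Finset.filter (fun x => x ≠ z) Finset.univ = Finset.univ.erase z := by
    ext x; simp
  rw [this, Finset.card_erase_of_mem (Finset.mem_univ z), Finset.card_univ]

lemma nat_card_ne2 {α : Type*} [Finite α] (z x : α) (hx : x ≠ z) :
    Nat.card {y : α // y ≠ z ∧ y ≠ x} = Nat.card α - 2 := by
  classical
  haveI : Fintype α := Fintype.ofFinite α
  simp only [Nat.card_eq_fintype_card]
  rw [Fintype.card_subtype]
  have h1 : Finset.filter (fun y => y ≠ z ∧ y ≠ x) Finset.univ
      = Finset.univ \ ({z, x} : Finset α) := by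
    ext y; simp [and_comm]
  rw [h1, Finset.card_sdiff_of_subset (Finset.subset_univ _), Finset.card_pair (Ne.symm hx),
    Finset.card_univ]

lemma nat_card_pairs {α : Type*} [Finite α] (z : α) :
    Nat.card {p : α × α // p.1 ≠ z ∧ p.2 ≠ z ∧ p.1 ≠ p.2}
      = (Nat.card α - 1) * (Nat.card α - 2) := by
  classical
  have e : {p : α × α // p.1 ≠ z ∧ p.2 ≠ z ∧ p.1 ≠ p.2}
      ≃ Σ x : {x : α // x ≠ z}, {y : α // y ≠ z ∧ y ≠ x.1} :=
    { toFun := fun p => ⟨⟨p.1.1, p.2.1⟩, ⟨p.1.2, p.2.2.1, Ne.symm p.2.2.2⟩⟩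
      invFun := fun q => ⟨(q.1.1, q.2.1), ⟨q.1.2, q.2.2.1, Ne.symm q.2.2.2⟩⟩
      left_inv := fun p => rfl
      right_inv := fun q => rfl }
  rw [Nat.card_congr e,
    nat_card_sigma_const (fun x : {x : α // x ≠ z} => {y : α // y ≠ z ∧ y ≠ x.1})
      (fun x => nat_card_ne2 z x.1 x.2), nat_card_ne z]

end Helpers

lemma exists_linearEquiv_of_indep {K V : Type*} [Field K] [AddCommGroup V] [Module K V]
    [Finite V] (s t : Set V)
    (hs : LinearIndependent K ((↑) : s → V)) (ht : LinearIndependent K ((↑) : t → V))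
    (g : s ≃ t) : ∃ e : V ≃ₗ[K] V, ∀ x : s, e x = (g x : V) := by
  classical
  replace hs : LinearIndepOn K id s := hs
  replace ht : LinearIndepOn K id t := ht
  have h1 : s ⊆ hs.extend (Set.subset_univ s) := hs.subset_extend _
  have h2 : t ⊆ ht.extend (Set.subset_univ t) := ht.subset_extend _
  let b1 := Basis.extend hs
  let b2 := Basis.extend ht
  haveI : Fintype (hs.extend (Set.subset_univ s)) := Fintype.ofFinite _
  haveI : Fintype (ht.extend (Set.subset_univ t)) := Fintype.ofFinite _
  haveI : Fintype s := Fintype.ofFinite _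
  haveI : Fintype t := Fintype.ofFinite _
  haveI : Fintype ((hs.extend (Set.subset_univ s)) \ s : Set V) := Fintype.ofFinite _
  haveI : Fintype ((ht.extend (Set.subset_univ t)) \ t : Set V) := Fintype.ofFinite _
  have hc1 : Fintype.card (hs.extend (Set.subset_univ s)) = finrank K V :=
    (finrank_eq_card_basis b1).symm
  have hc2 : Fintype.card (ht.extend (Set.subset_univ t)) = finrank K V :=
    (finrank_eq_card_basis b2).symm
  have hst : Fintype.card s = Fintype.card t := Fintype.card_congr g
  have hdiff : Fintype.card ((hs.extend (Set.subset_univ s)) \ s : Set V)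
      = Fintype.card ((ht.extend (Set.subset_univ t)) \ t : Set V) := by
    have d1 := Set.ncard_diff h1 (Set.toFinite _)
    have d2 := Set.ncard_diff h2 (Set.toFinite _)
    have e1 : ∀ (u : Set V) [Fintype u], Fintype.card u = u.ncard := by
      intro u _; rw [← Nat.card_coe_set_eq, Nat.card_eq_fintype_card]
    rw [e1, e1, d1, d2, ← e1, ← e1, ← e1, ← e1, hc1, hc2, hst]
  let Ediff := Fintype.equivOfCardEq hdiff
  let E : (hs.extend (Set.subset_univ s)) ≃ (ht.extend (Set.subset_univ t)) :=
    (Equiv.Set.sumDiffSubset h1).symm.trans ((g.sumCongr Ediff).trans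
      (Equiv.Set.sumDiffSubset h2))
  refine ⟨b1.equiv b2 E, fun x => ?_⟩
  have hx : (b1 (Set.inclusion h1 x) : V) = x := Basis.extend_apply_self hs _
  rw [← hx, Basis.equiv_apply]
  have hE : E (Set.inclusion h1 x) = Set.inclusion h2 (g x) := by
    show (Equiv.Set.sumDiffSubset h2) ((g.sumCongr Ediff)
      ((Equiv.Set.sumDiffSubset h1).symm (Set.inclusion h1 x))) = _
    rw [Equiv.Set.sumDiffSubset_symm_apply_of_mem h1 x.2]
    simp only [Equiv.sumCongr_apply, Sum.map_inl]
    rw [Equiv.Set.sumDiffSubset_apply_inl]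
  rw [hE]
  exact Basis.extend_apply_self ht _

variable {n d : ℕ}


lemma pair_indep (v w : Fin n → ZMod 2) (hv : v ≠ 0) (hw : w ≠ 0) (hvw : v ≠ w) :
    LinearIndependent (ZMod 2) ![v, w] := by
  rw [LinearIndependent.pair_iff]
  intro s t hst
  have hZ : ∀ a : ZMod 2, a = 0 ∨ a = 1 := by decide
  rcases hZ s with hs | hs <;> rcases hZ t with ht | ht <;> subst hs <;> subst ht
  · exact ⟨rfl, rfl⟩
  · rw [zero_smul, one_smul, zero_add] at hst; exact absurd hst hw
  · rw [one_smul, zero_smul, add_zero] at hst; exact absurd hst hv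
  · rw [one_smul, one_smul] at hst
    exfalso; apply hvw
    have hneg : v = -w := eq_neg_of_add_eq_zero_left hst
    rw [hneg, ← neg_one_smul (ZMod 2) w, show (-1 : ZMod 2) = 1 by decide, one_smul]

lemma pair_set_indep (v w : Fin n → ZMod 2) (hv : v ≠ 0) (hw : w ≠ 0) (hvw : v ≠ w) :
    LinearIndependent (ZMod 2) ((↑) : ({v, w} : Set (Fin n → ZMod 2)) → (Fin n → ZMod 2)) := by
  have h := (linearIndepOn_id_range_iff (pair_indep v w hv hw hvw).injective).mpr
    (pair_indep v w hv hw hvw)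
  have hr : Set.range ![v, w] = ({v, w} : Set (Fin n → ZMod 2)) := by
    ext x; simp [Fin.exists_fin_two, or_comm]
  rwa [hr] at h




lemma card_single_eq (v v' : Fin n → ZMod 2) (hv : v ≠ 0) (hv' : v' ≠ 0) :
    Nat.card {V : Submodule (ZMod 2) (Fin n → ZMod 2) // finrank (ZMod 2) V = d ∧ v ∈ V}
      = Nat.card {V : Submodule (ZMod 2) (Fin n → ZMod 2) // finrank (ZMod 2) V = d ∧ v' ∈ V} := by
  haveI : Unique (({v} : Set (Fin n → ZMod 2))) := Set.uniqueSingleton v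
  haveI : Unique (({v'} : Set (Fin n → ZMod 2))) := Set.uniqueSingleton v'
  obtain ⟨e, he⟩ := exists_linearEquiv_of_indep (K := ZMod 2) ({v} : Set (Fin n → ZMod 2)) {v'}
    (show LinearIndepOn (ZMod 2) id ({v} : Set _) from LinearIndepOn.singleton (v := id) hv)
    (show LinearIndepOn (ZMod 2) id ({v'} : Set _) from LinearIndepOn.singleton (v := id) hv')
    (Equiv.ofUnique _ _)
  have hev : e v = v' := by
    have h2 := (Equiv.ofUnique (({v} : Set (Fin n → ZMod 2)))
      (({v'} : Set (Fin n → ZMod 2))) ⟨v, rfl⟩).2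
    rw [Set.mem_singleton_iff] at h2
    rw [he ⟨v, rfl⟩, h2]
  refine Nat.card_congr (Equiv.subtypeEquiv (Submodule.orderIsoMapComap e).toEquiv fun V => ?_)
  have h1 : finrank (ZMod 2) (Submodule.map (e : (Fin n → ZMod 2) →ₗ[ZMod 2] (Fin n → ZMod 2)) V)
      = finrank (ZMod 2) V := LinearEquiv.finrank_map_eq e V
  have h2 : v' ∈ Submodule.map (e : (Fin n → ZMod 2) →ₗ[ZMod 2] (Fin n → ZMod 2)) V ↔ v ∈ V := by
    rw [Submodule.mem_map_equiv, show e.symm v' = v from by rw [← hev, e.symm_apply_apply]]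
  simp only [Submodule.orderIsoMapComap_apply, RelIso.coe_fn_toEquiv]
  change _ ↔ finrank (ZMod 2) (Submodule.map (e : (Fin n → ZMod 2) →ₗ[ZMod 2] (Fin n → ZMod 2)) V) = d ∧ _
  rw [h1, h2]

lemma card_pair_eq (v w v' w' : Fin n → ZMod 2) (hv : v ≠ 0) (hw : w ≠ 0) (hvw : v ≠ w)
    (hv' : v' ≠ 0) (hw' : w' ≠ 0) (hv'w' : v' ≠ w') :
    Nat.card {V : Submodule (ZMod 2) (Fin n → ZMod 2) // finrank (ZMod 2) V = d ∧ v ∈ V ∧ w ∈ V}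
      = Nat.card {V : Submodule (ZMod 2) (Fin n → ZMod 2) //
          finrank (ZMod 2) V = d ∧ v' ∈ V ∧ w' ∈ V} := by
  classical
  let g : ({v, w} : Set (Fin n → ZMod 2)) ≃ ({v', w'} : Set (Fin n → ZMod 2)) :=
    { toFun := fun x => if x.1 = v then ⟨v', Or.inl rfl⟩ else ⟨w', Or.inr rfl⟩
      invFun := fun y => if y.1 = v' then ⟨v, Or.inl rfl⟩ else ⟨w, Or.inr rfl⟩
      left_inv := by
        rintro ⟨x, hx⟩
        rcases hx with hx | hx <;> subst hx <;>
          simp [hvw, hvw.symm, hv'w', hv'w'.symm]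
      right_inv := by
        rintro ⟨y, hy⟩
        rcases hy with hy | hy <;> subst hy <;>
          simp [hvw, hvw.symm, hv'w', hv'w'.symm] }
  obtain ⟨e, he⟩ := exists_linearEquiv_of_indep (K := ZMod 2) ({v, w} : Set (Fin n → ZMod 2))
    {v', w'} (pair_set_indep v w hv hw hvw) (pair_set_indep v' w' hv' hw' hv'w') g
  have hev : e v = v' := by
    have := he ⟨v, Or.inl rfl⟩
    simpa [g] using this
  have hew : e w = w' := by
    have := he ⟨w, Or.inr rfl⟩
    simpa [g, hvw.symm] using this
  refine Nat.card_congr (Equiv.subtypeEquiv (Submodule.orderIsoMapComap e).toEquiv fun V => ?_)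
  have h1 : finrank (ZMod 2) (Submodule.map (e : (Fin n → ZMod 2) →ₗ[ZMod 2] (Fin n → ZMod 2)) V)
      = finrank (ZMod 2) V := LinearEquiv.finrank_map_eq e V
  have h2 : v' ∈ Submodule.map (e : (Fin n → ZMod 2) →ₗ[ZMod 2] (Fin n → ZMod 2)) V ↔ v ∈ V := by
    rw [Submodule.mem_map_equiv, show e.symm v' = v from by rw [← hev, e.symm_apply_apply]]
  have h3 : w' ∈ Submodule.map (e : (Fin n → ZMod 2) →ₗ[ZMod 2] (Fin n → ZMod 2)) V ↔ w ∈ V := by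
    rw [Submodule.mem_map_equiv, show e.symm w' = w from by rw [← hew, e.symm_apply_apply]]
  simp only [Submodule.orderIsoMapComap_apply, RelIso.coe_fn_toEquiv]
  change _ ↔ finrank (ZMod 2) (Submodule.map (e : (Fin n → ZMod 2) →ₗ[ZMod 2] (Fin n → ZMod 2)) V) = d ∧ _
  rw [h1, h2, h3]

lemma card_submodule (V : Submodule (ZMod 2) (Fin n → ZMod 2)) :
    Nat.card V = 2 ^ finrank (ZMod 2) V := by
  haveI : Fintype V := Fintype.ofFinite V
  rw [Nat.card_eq_fintype_card, card_eq_pow_finrank (K := ZMod 2), ZMod.card]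

lemma card_M : Nat.card (Fin n → ZMod 2) = 2 ^ n := by
  simp [Nat.card_pi, Nat.card_zmod]

lemma card_fiber1 (V : Submodule (ZMod 2) (Fin n → ZMod 2)) (hV : finrank (ZMod 2) V = d) :
    Nat.card {x : Fin n → ZMod 2 // x ∈ V ∧ x ≠ 0} = 2 ^ d - 1 := by
  have e : {x : Fin n → ZMod 2 // x ∈ V ∧ x ≠ 0} ≃ {y : V // y ≠ 0} :=
    { toFun := fun x => ⟨⟨x.1, x.2.1⟩, fun h => x.2.2 (congrArg Subtype.val h)⟩
      invFun := fun y => ⟨y.1.1, y.1.2, fun h => y.2 (Subtype.ext h)⟩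
      left_inv := fun x => rfl
      right_inv := fun y => rfl }
  rw [Nat.card_congr e, nat_card_ne (0 : V), card_submodule, hV]

lemma card_fiber2 (V : Submodule (ZMod 2) (Fin n → ZMod 2)) (hV : finrank (ZMod 2) V = d) :
    Nat.card {p : (Fin n → ZMod 2) × (Fin n → ZMod 2) //
        (p.1 ∈ V ∧ p.2 ∈ V) ∧ p.1 ≠ 0 ∧ p.2 ≠ 0 ∧ p.1 ≠ p.2}
      = (2 ^ d - 1) * (2 ^ d - 2) := by
  have e : {p : (Fin n → ZMod 2) × (Fin n → ZMod 2) //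
        (p.1 ∈ V ∧ p.2 ∈ V) ∧ p.1 ≠ 0 ∧ p.2 ≠ 0 ∧ p.1 ≠ p.2}
      ≃ {q : V × V // q.1 ≠ 0 ∧ q.2 ≠ 0 ∧ q.1 ≠ q.2} :=
    { toFun := fun p => ⟨(⟨p.1.1, p.2.1.1⟩, ⟨p.1.2, p.2.1.2⟩),
        fun h => p.2.2.1 (congrArg Subtype.val h),
        fun h => p.2.2.2.1 (congrArg Subtype.val h),
        fun h => p.2.2.2.2 (congrArg Subtype.val h)⟩
      invFun := fun q => ⟨(q.1.1.1, q.1.2.1), ⟨q.1.1.2, q.1.2.2⟩,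
        fun h => q.2.1 (Subtype.ext h), fun h => q.2.2.1 (Subtype.ext h),
        fun h => q.2.2.2 (Subtype.ext h)⟩
      left_inv := fun p => rfl
      right_inv := fun q => rfl }
  rw [Nat.card_congr e, nat_card_pairs (0 : V), card_submodule, hV]

lemma Sd_nonempty (hd : d ≤ n) :
    Nonempty {V : Submodule (ZMod 2) (Fin n → ZMod 2) // finrank (ZMod 2) V = d} := by
  have hfr : finrank (ZMod 2) (Fin n → ZMod 2) = n := finrank_fin_fun (ZMod 2)
  obtain ⟨f, hf⟩ := exists_linearIndependent_of_le_finrank (R := ZMod 2)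
    (show d ≤ finrank (ZMod 2) (Fin n → ZMod 2) by rw [hfr]; exact hd)
  exact ⟨⟨Submodule.span (ZMod 2) (Set.range f),
    by rw [finrank_span_eq_card hf, Fintype.card_fin]⟩⟩

lemma count1 (v : Fin n → ZMod 2) (hv : v ≠ 0) :
    Nat.card {V : Submodule (ZMod 2) (Fin n → ZMod 2) // finrank (ZMod 2) V = d} * (2 ^ d - 1)
      = Nat.card {V : Submodule (ZMod 2) (Fin n → ZMod 2) //
          finrank (ZMod 2) V = d ∧ v ∈ V} * (2 ^ n - 1) := by
  have A : Nat.card (Σ V : {V : Submodule (ZMod 2) (Fin n → ZMod 2) // finrank (ZMod 2) V = d},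
      {x : Fin n → ZMod 2 // x ∈ V.1 ∧ x ≠ 0})
      = Nat.card {V : Submodule (ZMod 2) (Fin n → ZMod 2) // finrank (ZMod 2) V = d}
        * (2 ^ d - 1) :=
    nat_card_sigma_const _ (fun V => card_fiber1 V.1 V.2)
  have E : (Σ V : {V : Submodule (ZMod 2) (Fin n → ZMod 2) // finrank (ZMod 2) V = d},
      {x : Fin n → ZMod 2 // x ∈ V.1 ∧ x ≠ 0})
      ≃ Σ x : {x : Fin n → ZMod 2 // x ≠ 0},
        {V : Submodule (ZMod 2) (Fin n → ZMod 2) // finrank (ZMod 2) V = d ∧ x.1 ∈ V} :=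
    { toFun := fun p => ⟨⟨p.2.1, p.2.2.2⟩, ⟨p.1.1, p.1.2, p.2.2.1⟩⟩
      invFun := fun q => ⟨⟨q.2.1, q.2.2.1⟩, ⟨q.1.1, q.2.2.2, q.1.2⟩⟩
      left_inv := fun p => rfl
      right_inv := fun q => rfl }
  have B : Nat.card (Σ x : {x : Fin n → ZMod 2 // x ≠ 0},
      {V : Submodule (ZMod 2) (Fin n → ZMod 2) // finrank (ZMod 2) V = d ∧ x.1 ∈ V})
      = Nat.card {x : Fin n → ZMod 2 // x ≠ 0}
        * Nat.card {V : Submodule (ZMod 2) (Fin n → ZMod 2) //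
            finrank (ZMod 2) V = d ∧ v ∈ V} :=
    nat_card_sigma_const _ (fun x => card_single_eq x.1 v x.2 hv)
  have C : Nat.card {x : Fin n → ZMod 2 // x ≠ 0} = 2 ^ n - 1 := by
    rw [nat_card_ne (0 : Fin n → ZMod 2), card_M]
  rw [← A, Nat.card_congr E, B, C, mul_comm]

lemma count2 (v w : Fin n → ZMod 2) (hv : v ≠ 0) (hw : w ≠ 0) (hvw : v ≠ w) :
    Nat.card {V : Submodule (ZMod 2) (Fin n → ZMod 2) // finrank (ZMod 2) V = d}
        * ((2 ^ d - 1) * (2 ^ d - 2))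
      = Nat.card {V : Submodule (ZMod 2) (Fin n → ZMod 2) //
          finrank (ZMod 2) V = d ∧ v ∈ V ∧ w ∈ V} * ((2 ^ n - 1) * (2 ^ n - 2)) := by
  have A : Nat.card (Σ V : {V : Submodule (ZMod 2) (Fin n → ZMod 2) // finrank (ZMod 2) V = d},
      {p : (Fin n → ZMod 2) × (Fin n → ZMod 2) //
        (p.1 ∈ V.1 ∧ p.2 ∈ V.1) ∧ p.1 ≠ 0 ∧ p.2 ≠ 0 ∧ p.1 ≠ p.2})
      = Nat.card {V : Submodule (ZMod 2) (Fin n → ZMod 2) // finrank (ZMod 2) V = d}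
        * ((2 ^ d - 1) * (2 ^ d - 2)) :=
    nat_card_sigma_const _ (fun V => card_fiber2 V.1 V.2)
  have E : (Σ V : {V : Submodule (ZMod 2) (Fin n → ZMod 2) // finrank (ZMod 2) V = d},
      {p : (Fin n → ZMod 2) × (Fin n → ZMod 2) //
        (p.1 ∈ V.1 ∧ p.2 ∈ V.1) ∧ p.1 ≠ 0 ∧ p.2 ≠ 0 ∧ p.1 ≠ p.2})
      ≃ Σ p : {p : (Fin n → ZMod 2) × (Fin n → ZMod 2) // p.1 ≠ 0 ∧ p.2 ≠ 0 ∧ p.1 ≠ p.2},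
        {V : Submodule (ZMod 2) (Fin n → ZMod 2) //
          finrank (ZMod 2) V = d ∧ p.1.1 ∈ V ∧ p.1.2 ∈ V} :=
    { toFun := fun q => ⟨⟨q.2.1, q.2.2.2⟩, ⟨q.1.1, q.1.2, q.2.2.1⟩⟩
      invFun := fun q => ⟨⟨q.2.1, q.2.2.1⟩, ⟨q.1.1, q.2.2.2, q.1.2⟩⟩
      left_inv := fun p => rfl
      right_inv := fun q => rfl }
  have B : Nat.card (Σ p : {p : (Fin n → ZMod 2) × (Fin n → ZMod 2) //
        p.1 ≠ 0 ∧ p.2 ≠ 0 ∧ p.1 ≠ p.2},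
      {V : Submodule (ZMod 2) (Fin n → ZMod 2) //
        finrank (ZMod 2) V = d ∧ p.1.1 ∈ V ∧ p.1.2 ∈ V})
      = Nat.card {p : (Fin n → ZMod 2) × (Fin n → ZMod 2) // p.1 ≠ 0 ∧ p.2 ≠ 0 ∧ p.1 ≠ p.2}
        * Nat.card {V : Submodule (ZMod 2) (Fin n → ZMod 2) //
            finrank (ZMod 2) V = d ∧ v ∈ V ∧ w ∈ V} :=
    nat_card_sigma_const _
      (fun p => card_pair_eq p.1.1 p.1.2 v w p.2.1 p.2.2.1 p.2.2.2 hv hw hvw)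
  have C : Nat.card {p : (Fin n → ZMod 2) × (Fin n → ZMod 2) // p.1 ≠ 0 ∧ p.2 ≠ 0 ∧ p.1 ≠ p.2}
      = (2 ^ n - 1) * (2 ^ n - 2) := by
    rw [nat_card_pairs (0 : Fin n → ZMod 2), card_M]
  rw [← A, Nat.card_congr E, B, C, mul_comm]

/-- for a uniformly random `d`-dimensional linear subspace `V` of
`F_2^n` and fixed distinct nonzero `v, w`,
`Pr[v ∈ V ∧ w ∈ V] = ((2^d−1)(2^d−2)/2) / ((2^n−1)(2^n−2)/2)`, and this is at
most `Pr[v ∈ V]·Pr[w ∈ V]`. -/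
theorem random_subspace_contains_pair_prob
    {n d : ℕ} (hn : 2 ≤ n) (hd : d ≤ n) (v w : Fin n → ZMod 2)
    (hv : v ≠ 0) (hw : w ≠ 0) (hvw : v ≠ w) :
    (Nat.card {V : Submodule (ZMod 2) (Fin n → ZMod 2) //
        Module.finrank (ZMod 2) V = d ∧ v ∈ V ∧ w ∈ V} : ℝ) /
      (Nat.card {V : Submodule (ZMod 2) (Fin n → ZMod 2) //
        Module.finrank (ZMod 2) V = d} : ℝ)
    = (((2:ℝ)^d - 1) * ((2:ℝ)^d - 2) / 2) / (((2:ℝ)^n - 1) * ((2:ℝ)^n - 2) / 2) ∧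
    (Nat.card {V : Submodule (ZMod 2) (Fin n → ZMod 2) //
        Module.finrank (ZMod 2) V = d ∧ v ∈ V ∧ w ∈ V} : ℝ) /
      (Nat.card {V : Submodule (ZMod 2) (Fin n → ZMod 2) //
        Module.finrank (ZMod 2) V = d} : ℝ)
    ≤ ((Nat.card {V : Submodule (ZMod 2) (Fin n → ZMod 2) //
          Module.finrank (ZMod 2) V = d ∧ v ∈ V} : ℝ) /
        (Nat.card {V : Submodule (ZMod 2) (Fin n → ZMod 2) //
          Module.finrank (ZMod 2) V = d} : ℝ)) *
      ((Nat.card {V : Submodule (ZMod 2) (Fin n → ZMod 2) //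
          Module.finrank (ZMod 2) V = d ∧ w ∈ V} : ℝ) /
        (Nat.card {V : Submodule (ZMod 2) (Fin n → ZMod 2) //
          Module.finrank (ZMod 2) V = d} : ℝ)) := by
  set N := Nat.card {V : Submodule (ZMod 2) (Fin n → ZMod 2) // finrank (ZMod 2) V = d} with hNdef
  set N1 := Nat.card {V : Submodule (ZMod 2) (Fin n → ZMod 2) //
    finrank (ZMod 2) V = d ∧ v ∈ V} with hN1def
  set N1' := Nat.card {V : Submodule (ZMod 2) (Fin n → ZMod 2) //
    finrank (ZMod 2) V = d ∧ w ∈ V} with hN1'def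
  set N2 := Nat.card {V : Submodule (ZMod 2) (Fin n → ZMod 2) //
    finrank (ZMod 2) V = d ∧ v ∈ V ∧ w ∈ V} with hN2def
  -- positivity facts
  have hNpos : 0 < N := by
    haveI := Sd_nonempty (n := n) (d := d) hd
    exact Nat.card_pos
  have hN0 : (N : ℝ) ≠ 0 := by positivity
  have h2n : (4:ℝ) ≤ (2:ℝ) ^ n := by
    calc (4:ℝ) = 2 ^ 2 := by norm_num
    _ ≤ 2 ^ n := pow_le_pow_right₀ (by norm_num) hn
  have hy1 : (0:ℝ) < (2:ℝ) ^ n - 1 := by linarith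
  have hy2 : (0:ℝ) < (2:ℝ) ^ n - 2 := by linarith
  have hx1 : (1:ℝ) ≤ (2:ℝ) ^ d := one_le_pow₀ (by norm_num)
  have hxy : (2:ℝ) ^ d ≤ (2:ℝ) ^ n := pow_le_pow_right₀ (by norm_num) hd
  -- real counting identity 1 (for v and for w)
  have h1dN : (1:ℕ) ≤ 2 ^ d := Nat.one_le_two_pow
  have h1nN : (1:ℕ) ≤ 2 ^ n := Nat.one_le_two_pow
  have hR1 : (N:ℝ) * ((2:ℝ)^d - 1) = (N1:ℝ) * ((2:ℝ)^n - 1) := by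
    have h := congrArg (Nat.cast : ℕ → ℝ) (count1 (d := d) v hv)
    push_cast [Nat.cast_sub h1dN, Nat.cast_sub h1nN] at h
    convert h using 2 <;> norm_num
  have hR1' : (N:ℝ) * ((2:ℝ)^d - 1) = (N1':ℝ) * ((2:ℝ)^n - 1) := by
    have h := congrArg (Nat.cast : ℕ → ℝ) (count1 (d := d) w hw)
    push_cast [Nat.cast_sub h1dN, Nat.cast_sub h1nN] at h
    convert h using 2 <;> norm_num
  -- real counting identity 2
  have h2nN : (2:ℕ) ≤ 2 ^ n := by
    calc (2:ℕ) = 2 ^ 1 := by norm_num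
    _ ≤ 2 ^ n := Nat.pow_le_pow_right (by norm_num) (by omega)
  have hR2 : (N:ℝ) * (((2:ℝ)^d - 1) * ((2:ℝ)^d - 2))
      = (N2:ℝ) * (((2:ℝ)^n - 1) * ((2:ℝ)^n - 2)) := by
    have hnat := count2 (d := d) v w hv hw hvw
    rcases Nat.lt_or_ge d 2 with hd2 | hd2
    · -- d = 0 or d = 1 : both sides are 0
      have hzero : (2 ^ d - 1) * (2 ^ d - 2) = 0 := by interval_cases d <;> norm_num
      rw [hzero, mul_zero] at hnat
      have hpos : 0 < (2 ^ n - 1) * (2 ^ n - 2) := by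
        have : 4 ≤ 2 ^ n := by
          calc (4:ℕ) = 2 ^ 2 := by norm_num
          _ ≤ 2 ^ n := Nat.pow_le_pow_right (by norm_num) hn
        have h1 : 0 < 2 ^ n - 1 := by omega
        have h2 : 0 < 2 ^ n - 2 := by omega
        positivity
      have hN2zero : N2 = 0 := by
        rcases Nat.mul_eq_zero.mp hnat.symm with h | h
        · exact h
        · omega
      rw [hN2zero]
      have hdz : ((2:ℝ)^d - 1) * ((2:ℝ)^d - 2) = 0 := by
        interval_cases d <;> norm_num
      rw [hdz]
      norm_num
    · have h2dN : (2:ℕ) ≤ 2 ^ d := by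
        calc (2:ℕ) = 2 ^ 1 := by norm_num
        _ ≤ 2 ^ d := Nat.pow_le_pow_right (by norm_num) (by omega)
      have h := congrArg (Nat.cast : ℕ → ℝ) hnat
      push_cast [Nat.cast_sub h1dN, Nat.cast_sub h1nN, Nat.cast_sub h2dN,
        Nat.cast_sub h2nN] at h
      convert h using 2 <;> norm_num
  -- division formulas
  have hq1 : (N1:ℝ) / N = ((2:ℝ)^d - 1) / ((2:ℝ)^n - 1) := by
    rw [div_eq_div_iff hN0 (ne_of_gt hy1)]
    linarith [hR1]
  have hq1' : (N1':ℝ) / N = ((2:ℝ)^d - 1) / ((2:ℝ)^n - 1) := by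
    rw [div_eq_div_iff hN0 (ne_of_gt hy1)]
    linarith [hR1']
  have hq2 : (N2:ℝ) / N
      = (((2:ℝ)^d - 1) * ((2:ℝ)^d - 2)) / (((2:ℝ)^n - 1) * ((2:ℝ)^n - 2)) := by
    rw [div_eq_div_iff hN0 (by positivity)]
    linarith [hR2]
  constructor
  · rw [div_div_div_comm, div_self (two_ne_zero), div_one]
    exact hq2
  · rw [hq2, hq1, hq1']
    rw [div_mul_div_comm, div_le_div_iff₀ (by positivity) (by positivity)]
    nlinarith [mul_nonneg (mul_nonneg (sub_nonneg.2 hx1) (sub_nonneg.2 hy1.le))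
      (sub_nonneg.2 hxy), sub_nonneg.2 hx1, sub_nonneg.2 hxy, hy1, hy2]
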